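/- For every function G : D → R there exists exactly one solution P of the corner-recursion system for G. -/

import Mathlib

/-- A disk (moduli) specification: a finite set of internal labels together with a
degree `(d⁺, d⁻)`, satisfying the stability condition `2|l| + 3(d⁺+d⁻) > 2`. -/
structure DiskSpec where
  l : Finset ℕ
  dp : ℕ
  dm : ℕ
  stab : 2 < 2 * l.card + 3 * (dp + dm)

/-- `(δ₁, δ₂)` is a splitting of `δ`: labels partition, degrees add up, and both halves
have nonzero degree. -/
def IsSplitting (δ δ₁ δ₂ : DiskSpec) : Prop :=
  Disjoint δ₁.l δ₂.l ∧ δ₁.l ∪ δ₂.l = δ.l ∧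
    δ₁.dp + δ₂.dp = δ.dp ∧ δ₁.dm + δ₂.dm = δ.dm ∧
    ¬(δ₁.dp = 0 ∧ δ₁.dm = 0) ∧ ¬(δ₂.dp = 0 ∧ δ₂.dm = 0)

/-- `P` is a solution of the corner-recursion system for `G`: for each `δ` the family
`P (·) δ` has finite support, its alternating sum is `G δ`, and for `c ≥ 1` the corner
contribution `P c δ` is the quadratic expression in lower corner contributions coming
from splittings of `δ`. -/
def IsCornerSolution {R : Type*} [CommRing R] [Algebra ℚ R] (u : R)
    (G : DiskSpec → R) (P : ℕ → DiskSpec → R) : Prop :=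
  (∀ δ : DiskSpec, {c : ℕ | P c δ ≠ 0}.Finite) ∧
  (∀ δ : DiskSpec, ∑ᶠ c : ℕ, (-1 : R) ^ c * P c δ = G δ) ∧
  (∀ δ : DiskSpec, ∀ c : ℕ, 1 ≤ c →
    P c δ = ((1 : ℚ) / 2 * (1 / (c : ℚ))) •
      (Ring.inverse (-(2 * u)) *
        ∑ᶠ (p : DiskSpec × DiskSpec) (_ : IsSplitting δ p.1 p.2),
          ∑ q ∈ Finset.HasAntidiagonal.antidiagonal (c - 1),
            ((p.1.dp : R) - (p.1.dm : R)) * ((p.2.dp : R) - (p.2.dm : R)) *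
              P q.1 p.1 * P q.2 p.2))

/-- The measure of a disk specification: total degree. -/
def DiskSpec.mu (δ : DiskSpec) : ℕ := δ.dp + δ.dm

lemma split_mu {δ a b : DiskSpec} (h : IsSplitting δ a b) :
    1 ≤ a.mu ∧ 1 ≤ b.mu ∧ a.mu + b.mu = δ.mu := by
  obtain ⟨-, -, h1, h2, h3, h4⟩ := h
  unfold DiskSpec.mu
  omega

lemma split_lt {δ a b : DiskSpec} (h : IsSplitting δ a b) :
    a.mu < δ.mu ∧ b.mu < δ.mu := by
  have := split_mu h; omega

/-- One step of the corner recursion. -/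
noncomputable def Fstep {R : Type*} [CommRing R] [Algebra ℚ R] (u : R)
    (prev : ℕ → DiskSpec → R) (c : ℕ) (δ : DiskSpec) : R :=
  ((1 : ℚ) / 2 * (1 / (c : ℚ))) •
    (Ring.inverse (-(2 * u)) *
      ∑ᶠ (p : DiskSpec × DiskSpec) (_ : IsSplitting δ p.1 p.2),
        ∑ q ∈ Finset.HasAntidiagonal.antidiagonal (c - 1),
          ((p.1.dp : R) - (p.1.dm : R)) * ((p.2.dp : R) - (p.2.dm : R)) *
            prev q.1 p.1 * prev q.2 p.2)

lemma Fstep_congr {R : Type*} [CommRing R] [Algebra ℚ R] (u : R)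
    {prev prev' : ℕ → DiskSpec → R} {c : ℕ} {δ : DiskSpec}
    (h : ∀ δ' : DiskSpec, δ'.mu < δ.mu → ∀ c', prev c' δ' = prev' c' δ') :
    Fstep u prev c δ = Fstep u prev' c δ := by
  unfold Fstep
  congr 2
  refine finsum_congr fun p => finsum_congr fun hs => Finset.sum_congr rfl fun q _ => ?_
  rw [h p.1 (split_lt hs).1 q.1, h p.2 (split_lt hs).2 q.2]

/-- Fuel-based approximations to the solution. -/
noncomputable def Aseq {R : Type*} [CommRing R] [Algebra ℚ R] (u : R)
    (G : DiskSpec → R) : ℕ → ℕ → DiskSpec → R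
  | 0 => fun _ _ => 0
  | n + 1 => fun c δ =>
      if c = 0 then
        G δ - ∑ᶠ c' : ℕ, (-1 : R) ^ c' *
          (if c' = 0 then 0 else Fstep u (Aseq u G n) c' δ)
      else Fstep u (Aseq u G n) c δ

lemma Aseq_vanish {R : Type*} [CommRing R] [Algebra ℚ R] (u : R)
    (G : DiskSpec → R) : ∀ n c (δ : DiskSpec), 1 ≤ c → δ.mu ≤ c →
      Aseq u G n c δ = 0 := by
  intro n
  induction n with
  | zero => intro c δ _ _; rfl
  | succ n ih =>
    intro c δ hc hm
    have hc0 : c ≠ 0 := by omega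
    show (if c = 0 then _ else Fstep u (Aseq u G n) c δ) = 0
    rw [if_neg hc0]
    unfold Fstep
    have hz : (∑ᶠ (p : DiskSpec × DiskSpec) (_ : IsSplitting δ p.1 p.2),
        ∑ q ∈ Finset.HasAntidiagonal.antidiagonal (c - 1),
          ((p.1.dp : R) - (p.1.dm : R)) * ((p.2.dp : R) - (p.2.dm : R)) *
            Aseq u G n q.1 p.1 * Aseq u G n q.2 p.2) = 0 := by
      rw [show (0 : R) = ∑ᶠ (p : DiskSpec × DiskSpec) (_ : IsSplitting δ p.1 p.2), (0 : R) by
        simp]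
      refine finsum_congr fun p => finsum_congr fun hs => ?_
      refine Finset.sum_eq_zero fun q hq => ?_
      rw [Finset.HasAntidiagonal.mem_antidiagonal] at hq
      obtain ⟨h1, h2, h3⟩ := split_mu hs
      rcases le_or_gt p.1.mu q.1 with h | h
      · rw [ih q.1 p.1 (le_trans h1 h) h]; ring
      · have : p.2.mu ≤ q.2 := by omega
        rw [ih q.2 p.2 (le_trans h2 this) this]; ring
    rw [hz, mul_zero, smul_zero]

lemma Aseq_stable {R : Type*} [CommRing R] [Algebra ℚ R] (u : R)
    (G : DiskSpec → R) : ∀ k (δ : DiskSpec), δ.mu = k → ∀ n m c, k < n → k < m →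
      Aseq u G n c δ = Aseq u G m c δ := by
  intro k
  induction k using Nat.strong_induction_on with
  | _ k ih =>
    intro δ hk n m c hn hm
    obtain ⟨n, rfl⟩ : ∃ n', n = n' + 1 := ⟨n - 1, by omega⟩
    obtain ⟨m, rfl⟩ : ∃ m', m = m' + 1 := ⟨m - 1, by omega⟩
    have hF : ∀ c', Fstep u (Aseq u G n) c' δ = Fstep u (Aseq u G m) c' δ := by
      intro c'
      refine Fstep_congr u fun δ' hδ' c'' => ?_
      exact ih δ'.mu (by omega) δ' rfl n m c'' (by omega) (by omega)
    show (if c = 0 then _ else _) = (if c = 0 then _ else _)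
    rcases eq_or_ne c 0 with rfl | hc
    · rw [if_pos rfl, if_pos rfl]
      congr 1
      refine finsum_congr fun c' => ?_
      rcases eq_or_ne c' 0 with rfl | h
      · simp
      · rw [if_neg h, if_neg h, hF]
    · rw [if_neg hc, if_neg hc, hF]

/-- The solution to the corner recursion. -/
noncomputable def solP {R : Type*} [CommRing R] [Algebra ℚ R] (u : R)
    (G : DiskSpec → R) (c : ℕ) (δ : DiskSpec) : R :=
  Aseq u G (δ.mu + 1) c δ

lemma solP_vanish {R : Type*} [CommRing R] [Algebra ℚ R] (u : R)
    (G : DiskSpec → R) {c : ℕ} {δ : DiskSpec} (hc : 1 ≤ c) (hm : δ.mu ≤ c) :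
    solP u G c δ = 0 :=
  Aseq_vanish u G _ c δ hc hm

lemma Fstep_eq_of_lower {R : Type*} [CommRing R] [Algebra ℚ R] (u : R)
    (G : DiskSpec → R) {n : ℕ} {δ : DiskSpec} (hn : δ.mu ≤ n) (c : ℕ) :
    Fstep u (Aseq u G n) c δ = Fstep u (solP u G) c δ := by
  refine Fstep_congr u fun δ' hδ' c' => ?_
  exact Aseq_stable u G δ'.mu δ' rfl n (δ'.mu + 1) c' (by omega) (by omega)

lemma solP_rec {R : Type*} [CommRing R] [Algebra ℚ R] (u : R)
    (G : DiskSpec → R) {c : ℕ} (hc : 1 ≤ c) (δ : DiskSpec) :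
    solP u G c δ = Fstep u (solP u G) c δ := by
  show (if c = 0 then _ else Fstep u (Aseq u G δ.mu) c δ) = _
  rw [if_neg (by omega), Fstep_eq_of_lower u G le_rfl]

lemma solP_zero {R : Type*} [CommRing R] [Algebra ℚ R] (u : R)
    (G : DiskSpec → R) (δ : DiskSpec) :
    solP u G 0 δ = G δ - ∑ᶠ c' : ℕ, (-1 : R) ^ c' *
      (if c' = 0 then 0 else solP u G c' δ) := by
  have step : solP u G 0 δ = G δ - ∑ᶠ c' : ℕ, (-1 : R) ^ c' *
      (if c' = 0 then 0 else Fstep u (Aseq u G δ.mu) c' δ) := by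
    show (if (0 : ℕ) = 0 then
        G δ - ∑ᶠ c' : ℕ, (-1 : R) ^ c' *
          (if c' = 0 then 0 else Fstep u (Aseq u G δ.mu) c' δ)
      else Fstep u (Aseq u G δ.mu) 0 δ) = _
    rw [if_pos rfl]
  rw [step]
  congr 1
  refine finsum_congr fun c' => ?_
  rcases eq_or_ne c' 0 with rfl | h
  · simp
  · rw [if_neg h, if_neg h, Fstep_eq_of_lower u G le_rfl, ← solP_rec u G (by omega)]

theorem solP_isSolution {R : Type*} [CommRing R] [Algebra ℚ R] (u : R)
    (G : DiskSpec → R) : IsCornerSolution u G (solP u G) := by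
  have hfin : ∀ δ : DiskSpec, {c : ℕ | solP u G c δ ≠ 0}.Finite := by
    intro δ
    refine (Set.finite_Iic δ.mu).subset fun c hc => ?_
    simp only [Set.mem_setOf_eq] at hc
    by_contra h
    simp only [Set.mem_Iic, not_le] at h
    exact hc (solP_vanish u G (by omega) (by omega))
  refine ⟨hfin, fun δ => ?_, fun δ c hc => ?_⟩
  · set T : ℕ → R := fun c => if c = 0 then 0 else (-1 : R) ^ c * solP u G c δ with hT
    set f : ℕ → R := fun c => (-1 : R) ^ c * solP u G c δ with hf
    have hTfin : T.support.Finite := by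
      refine ((hfin δ).subset ?_)
      intro c hc
      simp only [Function.mem_support, hT] at hc
      rcases eq_or_ne c 0 with rfl | h
      · simp at hc
      · rw [if_neg h] at hc
        simp only [Set.mem_setOf_eq]
        intro h0; rw [h0, mul_zero] at hc; exact hc rfl
    have hfT : (fun c => f c - T c).support.Finite := by
      refine Set.Finite.subset (Set.finite_singleton 0) fun c hc => ?_
      simp only [Function.mem_support, hf, hT] at hc
      rcases eq_or_ne c 0 with rfl | h
      · exact rfl
      · rw [if_neg h, sub_self] at hc; exact absurd rfl hc
    have hsplit : ∑ᶠ c, f c = (∑ᶠ c, (f c - T c)) + ∑ᶠ c, T c := by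
      rw [← finsum_add_distrib hfT hTfin]
      exact finsum_congr fun c => by ring
    have hsingle : ∑ᶠ c, (f c - T c) = solP u G 0 δ := by
      rw [finsum_eq_single _ 0 (fun c hc => by simp [hf, hT, if_neg hc])]
      simp [hf, hT]
    have hTs : ∑ᶠ c, T c = ∑ᶠ c' : ℕ, (-1 : R) ^ c' *
        (if c' = 0 then 0 else solP u G c' δ) := by
      refine finsum_congr fun c => ?_
      rcases eq_or_ne c 0 with rfl | h
      · simp [hT]
      · simp [hT, h]
    show ∑ᶠ c, f c = G δ
    rw [hsplit, hsingle, hTs, solP_zero u G δ]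
    ring
  · exact solP_rec u G hc δ

theorem corner_unique {R : Type*} [CommRing R] [Algebra ℚ R] (u : R)
    (G : DiskSpec → R) {P P' : ℕ → DiskSpec → R}
    (hP : IsCornerSolution u G P) (hP' : IsCornerSolution u G P') : P = P' := by
  obtain ⟨hfin, halt, hrec⟩ := hP
  obtain ⟨hfin', halt', hrec'⟩ := hP'
  have key : ∀ k (δ : DiskSpec), δ.mu = k → ∀ c, P c δ = P' c δ := by
    intro k
    induction k using Nat.strong_induction_on with
    | _ k ih =>
      intro δ hk c
      have hpos : ∀ c', 1 ≤ c' → P c' δ = P' c' δ := by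
        intro c' hc'
        rw [hrec δ c' hc', hrec' δ c' hc']
        exact Fstep_congr u (prev := P) (prev' := P')
          (fun δ' hδ' c'' => ih δ'.mu (by omega) δ' rfl c'') (c := c') (δ := δ)
      rcases eq_or_ne c 0 with rfl | hc
      · set f : ℕ → R := fun c => (-1 : R) ^ c * P c δ with hf
        set g : ℕ → R := fun c => (-1 : R) ^ c * P' c δ with hg
        have hffin : f.support.Finite := by
          refine (hfin δ).subset fun c hc => ?_
          simp only [Function.mem_support, hf] at hc
          intro h0; rw [h0, mul_zero] at hc; exact hc rfl
        have hgfin : g.support.Finite := by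
          refine (hfin' δ).subset fun c hc => ?_
          simp only [Function.mem_support, hg] at hc
          intro h0; rw [h0, mul_zero] at hc; exact hc rfl
        have hsub : ∑ᶠ c, (f c - g c) = ∑ᶠ c, f c - ∑ᶠ c, g c := finsum_sub_distrib hffin hgfin
        have hzero : ∑ᶠ c, (f c - g c) = P 0 δ - P' 0 δ := by
          rw [finsum_eq_single _ 0 (fun c hc => by
            simp only [hf, hg]
            rw [hpos c (by omega)]; ring)]
          simp [hf, hg]
        have : ∑ᶠ c, f c - ∑ᶠ c, g c = 0 := by
          rw [halt δ, halt' δ, sub_self]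
        rw [hsub, this] at hzero
        exact sub_eq_zero.mp hzero.symm
      · exact hpos c (by omega)
  funext c δ
  exact key δ.mu δ rfl c

/-- Existence and uniqueness of the solution to the corner-recursion system. -/
theorem stmt3 {R : Type*} [CommRing R] [Algebra ℚ R] (u : R) (hu : IsUnit u)
    (G : DiskSpec → R) :
    ∃! P : ℕ → DiskSpec → R, IsCornerSolution u G P := by
  refine ⟨solP u G, solP_isSolution u G, fun P hP => corner_unique u G hP (solP_isSolution u G)⟩
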